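/- arXiv:2302.03143 — 5 statements merged into one kernel-verified Lean document; each statement's English description precedes it below -/
import Mathlib

section
/- Let f : 2^E → ℝ be a normalised (f(∅)=0) submodular function. Then for every A ⊆ E, f(A) equals the maximum of ⟨y, 1_A⟩ over all extreme points y of the base polyhedron B(f). -/
theorem stmt_4 {E : Type*} [Fintype E] [DecidableEq E] (f : Finset E → ℝ)
    (hsub : ∀ S T : Finset E, f (S ∩ T) + f (S ∪ T) ≤ f S + f T)
    (hnorm : f ∅ = 0) (A : Finset E) :
    IsGreatest {r : ℝ | ∃ y ∈ Set.extremePoints ℝ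
        {x : E → ℝ | (∀ S : Finset E, ∑ e ∈ S, x e ≤ f S) ∧
          ∑ e, x e = f Finset.univ},
      r = ∑ e ∈ A, y e} (f A) := by
  classical
  set l : List E := A.toList ++ Aᶜ.toList with hl
  have hmem : ∀ e : E, e ∈ l := by
    intro e
    by_cases he : e ∈ A
    · exact List.mem_append_left _ (Finset.mem_toList.mpr he)
    · exact List.mem_append_right _ (Finset.mem_toList.mpr (Finset.mem_compl.mpr he))
  have hnodup : l.Nodup := by
    refine List.Nodup.append A.nodup_toList Aᶜ.nodup_toList ?_
    intro e he1 he2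
    rw [Finset.mem_toList] at he1 he2
    exact (Finset.mem_compl.mp he2) he1
  set r : E → ℕ := fun e => l.idxOf e with hrdef
  have hrlt : ∀ e, r e < l.length := fun e => List.idxOf_lt_length_iff.mpr (hmem e)
  have hrinj : Function.Injective r := by
    intro e1 e2 h
    exact (List.idxOf_inj (hmem e1)).mp h
  have hrA : ∀ e, e ∈ A ↔ r e < A.card := by
    intro e
    constructor
    · intro he
      have : r e = A.toList.idxOf e := List.idxOf_append_of_mem (Finset.mem_toList.mpr he)
      rw [this]
      have := List.idxOf_lt_length_iff.mpr (Finset.mem_toList.mpr he)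
      rwa [Finset.length_toList] at this
    · intro h
      by_contra he
      have : r e = A.toList.length + Aᶜ.toList.idxOf e :=
        List.idxOf_append_of_notMem (fun hc => he (Finset.mem_toList.mp hc))
      rw [this, Finset.length_toList] at h
      omega
  set S : ℕ → Finset E := fun k => Finset.univ.filter (fun e => r e < k) with hSdef
  have hS0 : S 0 = ∅ := by simp [hSdef]
  have hSlen : S l.length = Finset.univ := by
    ext e; simp [hSdef, hrlt e]
  have hSA : S A.card = A := by
    ext e; simp [hSdef, (hrA e).symm]
  have heS : ∀ e, e ∉ S (r e) := by
    intro e h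
    simp [hSdef] at h
  have hSsucc : ∀ e : E, S (r e + 1) = insert e (S (r e)) := by
    intro e
    ext e'
    simp only [hSdef, Finset.mem_filter, Finset.mem_univ, true_and, Finset.mem_insert]
    constructor
    · intro h
      rcases Nat.lt_succ_iff_lt_or_eq.mp h with h | h
      · exact Or.inr h
      · exact Or.inl (hrinj h)
    · rintro (rfl | h)
      · omega
      · omega
  have hsurj : ∀ k, k < l.length → ∃ e, r e = k := by
    intro k hk
    exact ⟨l.get ⟨k, hk⟩, List.Nodup.idxOf_getElem hnodup k hk⟩
  have hSstep : ∀ k, k < l.length → ∃ e, r e = k ∧ S (k + 1) = insert e (S k) ∧ e ∉ S k := by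
    intro k hk
    obtain ⟨e, rfl⟩ := hsurj k hk
    exact ⟨e, rfl, hSsucc e, heS e⟩
  set y : E → ℝ := fun e => f (S (r e + 1)) - f (S (r e)) with hydef
  -- telescoping
  have htel : ∀ k, k ≤ l.length → ∑ e ∈ S k, y e = f (S k) := by
    intro k
    induction k with
    | zero => intro _; simp [hS0, hnorm]
    | succ k ih =>
      intro hk
      obtain ⟨e, hre, hSk, heSk⟩ := hSstep k (by omega)
      rw [hSk, Finset.sum_insert heSk, ih (by omega), hydef]
      simp only [hre, hSk]
      ring
  -- feasibility
  have hfeas : ∀ T : Finset E, ∑ e ∈ T, y e ≤ f T := by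
    intro T
    induction T using Finset.strongInduction with
    | _ T ih =>
      rcases T.eq_empty_or_nonempty with rfl | hT
      · simp [hnorm]
      · obtain ⟨e, he, hmax⟩ := T.exists_max_image r hT
        have hT' : T.erase e ⊆ S (r e) := by
          intro e' he'
          rw [Finset.mem_erase] at he'
          simp only [hSdef, Finset.mem_filter, Finset.mem_univ, true_and]
          have := hmax e' he'.2
          rcases lt_or_eq_of_le this with h | h
          · exact h
          · exact absurd (hrinj h) he'.1
        have hcap : S (r e) ∩ T = T.erase e := by
          ext e'
          simp only [Finset.mem_inter, Finset.mem_erase]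
          constructor
          · rintro ⟨h1, h2⟩
            refine ⟨?_, h2⟩
            rintro rfl
            exact heS e' h1
          · rintro ⟨h1, h2⟩
            exact ⟨hT' (Finset.mem_erase.mpr ⟨h1, h2⟩), h2⟩
        have hcup : S (r e) ∪ T = S (r e + 1) := by
          rw [hSsucc e]
          ext e'
          simp only [Finset.mem_union, Finset.mem_insert]
          constructor
          · rintro (h | h)
            · exact Or.inr h
            · by_cases h' : e' = e
              · exact Or.inl h'
              · exact Or.inr (hT' (Finset.mem_erase.mpr ⟨h', h⟩))
          · rintro (rfl | h)
            · exact Or.inr he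
            · exact Or.inl h
        have hsm := hsub (S (r e)) T
        rw [hcap, hcup] at hsm
        have hih := ih (T.erase e) (Finset.erase_ssubset he)
        have : ∑ e' ∈ T, y e' = y e + ∑ e' ∈ T.erase e, y e' :=
          (Finset.add_sum_erase T y he).symm
        rw [this, hydef]
        simp only
        linarith
  have hylen : ∑ e, y e = f Finset.univ := by
    rw [← hSlen]; exact htel l.length le_rfl
  have hyA : ∑ e ∈ A, y e = f A := by
    have hAcard : A.card ≤ l.length := by
      rw [hl, List.length_append, Finset.length_toList]
      omega
    rw [← hSA]; exact htel A.card hAcard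
  have hymem : y ∈ {x : E → ℝ | (∀ S : Finset E, ∑ e ∈ S, x e ≤ f S) ∧
          ∑ e, x e = f Finset.univ} := ⟨hfeas, hylen⟩
  -- extreme point
  have hyext : y ∈ Set.extremePoints ℝ
      {x : E → ℝ | (∀ S : Finset E, ∑ e ∈ S, x e ≤ f S) ∧
          ∑ e, x e = f Finset.univ} := by
    rw [mem_extremePoints]
    refine ⟨hymem, ?_⟩
    intro x₁ hx₁ x₂ hx₂ hseg
    obtain ⟨a, b, ha, hb, hab, hsum⟩ := hseg
    have hpt : ∀ e : E, a * x₁ e + b * x₂ e = y e := by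
      intro e
      have := congrFun hsum e
      simpa using this
    have hpref : ∀ k, k ≤ l.length →
        (∑ e ∈ S k, x₁ e = f (S k) ∧ ∑ e ∈ S k, x₂ e = f (S k)) := by
      intro k hk
      have h1 : ∑ e ∈ S k, x₁ e ≤ f (S k) := hx₁.1 (S k)
      have h2 : ∑ e ∈ S k, x₂ e ≤ f (S k) := hx₂.1 (S k)
      have hcomb : a * (∑ e ∈ S k, x₁ e) + b * (∑ e ∈ S k, x₂ e) = f (S k) := by
        rw [Finset.mul_sum, Finset.mul_sum, ← Finset.sum_add_distrib]
        rw [← htel k hk]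
        exact Finset.sum_congr rfl fun e _ => hpt e
      have p1 : 0 ≤ a * (f (S k) - ∑ e ∈ S k, x₁ e) := mul_nonneg ha.le (by linarith)
      have p2 : 0 ≤ b * (f (S k) - ∑ e ∈ S k, x₂ e) := mul_nonneg hb.le (by linarith)
      have key : a * (f (S k) - ∑ e ∈ S k, x₁ e) + b * (f (S k) - ∑ e ∈ S k, x₂ e) = 0 := by
        linear_combination (f (S k)) * hab - hcomb
      have e1 : a * (f (S k) - ∑ e ∈ S k, x₁ e) = 0 := by linarith
      have e2 : b * (f (S k) - ∑ e ∈ S k, x₂ e) = 0 := by linarith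
      constructor
      · have := (mul_eq_zero.mp e1).resolve_left (ne_of_gt ha)
        linarith
      · have := (mul_eq_zero.mp e2).resolve_left (ne_of_gt hb)
        linarith
    have hx : ∀ (x : E → ℝ), (∀ k, k ≤ l.length → ∑ e ∈ S k, x e = f (S k)) → x = y := by
      intro x hxk
      funext e
      have h1 := hxk (r e) (hrlt e).le
      have h2 := hxk (r e + 1) (hrlt e)
      rw [hSsucc e, Finset.sum_insert (heS e)] at h2
      rw [hydef]
      simp only
      rw [hSsucc e]
      linarith
    exact ⟨hx x₁ fun k hk => (hpref k hk).1, hx x₂ fun k hk => (hpref k hk).2⟩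
  constructor
  · exact ⟨y, hyext, hyA.symm⟩
  · rintro s ⟨y', hy', rfl⟩
    exact hy'.1.1 A
end

section
/- Let f, g : 2^E → ℝ_{≥0} be monotone submodular functions with curvatures c_f, c_g ∈ [0,1). Define S_f(A) = Σ_{e∈A} (f({e}) − f(∅)) and S_g(A) = Σ_{e∈A} (g({e}) − g(∅)). Then for all A ⊆ E with g(A) > 0 and S_g(A) + g(∅) > 0: ((1−c_f)·S_f(A) + f(∅))/(S_g(A) + g(∅)) ≤ f(A)/g(A) ≤ (S_f(A) + f(∅))/((1−c_g)·S_g(A) + g(∅)). -/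
private lemma sq_upper {E : Type*} [DecidableEq E] (f : Finset E → ℝ)
    (hfsub : ∀ S T : Finset E, f (S ∩ T) + f (S ∪ T) ≤ f S + f T)
    (A : Finset E) : f A ≤ (∑ e ∈ A, (f {e} - f ∅)) + f ∅ := by
  induction A using Finset.induction with
  | empty => simp
  | @insert a s h ih =>
    have hsub := hfsub {a} s
    rw [Finset.singleton_inter_of_notMem h, ← Finset.insert_eq] at hsub
    rw [Finset.sum_insert h]
    linarith

private lemma sq_lower {E : Type*} [DecidableEq E] (f : Finset E → ℝ) (c : ℝ)
    (hcurv : ∀ (S : Finset E) (e : E), e ∉ S →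
      (1 - c) * (f {e} - f ∅) ≤ f (insert e S) - f S)
    (A : Finset E) : (1 - c) * (∑ e ∈ A, (f {e} - f ∅)) + f ∅ ≤ f A := by
  induction A using Finset.induction with
  | empty => simp
  | @insert a s h ih =>
    have hc := hcurv s a h
    rw [Finset.sum_insert h, mul_add]
    linarith

theorem stmt_9 {E : Type*} [Fintype E] [DecidableEq E] (f g : Finset E → ℝ)
    (hf0 : ∀ S, 0 ≤ f S) (hg0 : ∀ S, 0 ≤ g S)
    (hfsub : ∀ S T : Finset E, f (S ∩ T) + f (S ∪ T) ≤ f S + f T)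
    (hgsub : ∀ S T : Finset E, g (S ∩ T) + g (S ∪ T) ≤ g S + g T)
    (hfmono : ∀ S T : Finset E, S ⊆ T → f S ≤ f T)
    (hgmono : ∀ S T : Finset E, S ⊆ T → g S ≤ g T)
    (cf cg : ℝ) (hcf : cf ∈ Set.Ico (0 : ℝ) 1) (hcg : cg ∈ Set.Ico (0 : ℝ) 1)
    (hfcurv : ∀ (S : Finset E) (e : E), e ∉ S →
      (1 - cf) * (f {e} - f ∅) ≤ f (insert e S) - f S)
    (hgcurv : ∀ (S : Finset E) (e : E), e ∉ S →
      (1 - cg) * (g {e} - g ∅) ≤ g (insert e S) - g S)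
    (A : Finset E) (hgA : 0 < g A)
    (hden : 0 < (∑ e ∈ A, (g {e} - g ∅)) + g ∅) :
    ((1 - cf) * (∑ e ∈ A, (f {e} - f ∅)) + f ∅) /
        ((∑ e ∈ A, (g {e} - g ∅)) + g ∅) ≤ f A / g A ∧
    f A / g A ≤ ((∑ e ∈ A, (f {e} - f ∅)) + f ∅) /
        ((1 - cg) * (∑ e ∈ A, (g {e} - g ∅)) + g ∅) := by
  have hfu := sq_upper f hfsub A
  have hfl := sq_lower f cf hfcurv A
  have hgu := sq_upper g hgsub A
  have hgl := sq_lower g cg hgcurv A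
  have hSg : 0 ≤ ∑ e ∈ A, (g {e} - g ∅) :=
    Finset.sum_nonneg fun e _ => by
      have := hgmono ∅ {e} (Finset.empty_subset _); linarith
  have hd2 : 0 < (1 - cg) * (∑ e ∈ A, (g {e} - g ∅)) + g ∅ := by
    rcases lt_or_eq_of_le (hg0 ∅) with h | h
    · have : 0 ≤ (1 - cg) * (∑ e ∈ A, (g {e} - g ∅)) :=
        mul_nonneg (by linarith [hcg.2]) hSg
      linarith
    · have hSg' : 0 < ∑ e ∈ A, (g {e} - g ∅) := by linarith
      have : 0 < (1 - cg) * (∑ e ∈ A, (g {e} - g ∅)) :=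
        mul_pos (by linarith [hcg.2]) hSg'
      linarith
  constructor
  · exact div_le_div₀ (hf0 A) hfl hgA hgu
  · exact div_le_div₀ (by linarith [hf0 A]) hfu hd2 hgl
end

section
/- Let f, g : 2^E → ℝ_{≥0} be monotone submodular with curvatures c_f, c_g and f(∅), g(∅) ≥ 0. Suppose A ⊆ E satisfies (S_f(A) + f(∅))/(S_g(A) + g(∅)) ≥ (1−ε)·(S_f(A*) + f(∅))/(S_g(A*) + g(∅)) for all A* ⊆ E, where S_f(A) = Σ_{e∈A}(f({e}) − f(∅)). Then f(A)/g(A) ≥ (1−ε)(1−c_f)(1−c_g)·f(A*)/g(A*) for all A* ⊆ E (whenever all denominators are positive). -/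
private lemma aux_upper {E : Type*} [DecidableEq E] (h : Finset E → ℝ)
    (hsub : ∀ S T : Finset E, h (S ∩ T) + h (S ∪ T) ≤ h S + h T) (B : Finset E) :
    h B ≤ (∑ e ∈ B, (h {e} - h ∅)) + h ∅ := by
  induction B using Finset.induction_on with
  | empty => simp
  | @insert e S he ih =>
    have h1 := hsub {e} S
    rw [Finset.singleton_inter_of_notMem he, ← Finset.insert_eq] at h1
    rw [Finset.sum_insert he]
    linarith

private lemma aux_lower {E : Type*} [DecidableEq E] (h : Finset E → ℝ) (c : ℝ)
    (hcurv : ∀ (S : Finset E) (e : E), e ∉ S →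
      (1 - c) * (h {e} - h ∅) ≤ h (insert e S) - h S) (B : Finset E) :
    (1 - c) * (∑ e ∈ B, (h {e} - h ∅)) + h ∅ ≤ h B := by
  induction B using Finset.induction_on with
  | empty => simp
  | @insert e S he ih =>
    have h1 := hcurv S e he
    rw [Finset.sum_insert he, mul_add]
    linarith

theorem stmt_10 {E : Type*} [Fintype E] [DecidableEq E] (f g : Finset E → ℝ)
    (hf0 : ∀ S, 0 ≤ f S) (hg0 : ∀ S, 0 ≤ g S)
    (hfsub : ∀ S T : Finset E, f (S ∩ T) + f (S ∪ T) ≤ f S + f T)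
    (hgsub : ∀ S T : Finset E, g (S ∩ T) + g (S ∪ T) ≤ g S + g T)
    (hfmono : ∀ S T : Finset E, S ⊆ T → f S ≤ f T)
    (hgmono : ∀ S T : Finset E, S ⊆ T → g S ≤ g T)
    (cf cg ε : ℝ) (hcf : cf ∈ Set.Ico (0 : ℝ) 1) (hcg : cg ∈ Set.Ico (0 : ℝ) 1)
    (hε : ε ∈ Set.Ioo (0 : ℝ) 1)
    (hfcurv : ∀ (S : Finset E) (e : E), e ∉ S →
      (1 - cf) * (f {e} - f ∅) ≤ f (insert e S) - f S)
    (hgcurv : ∀ (S : Finset E) (e : E), e ∉ S →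
      (1 - cg) * (g {e} - g ∅) ≤ g (insert e S) - g S)
    (A : Finset E)
    (happrox : ∀ Astar : Finset E,
      (1 - ε) * (((∑ e ∈ Astar, (f {e} - f ∅)) + f ∅) /
          ((∑ e ∈ Astar, (g {e} - g ∅)) + g ∅)) ≤
        ((∑ e ∈ A, (f {e} - f ∅)) + f ∅) / ((∑ e ∈ A, (g {e} - g ∅)) + g ∅))
    (hgA : 0 < g A) (hdenA : 0 < (∑ e ∈ A, (g {e} - g ∅)) + g ∅) :
    ∀ Astar : Finset E, 0 < g Astar →
      0 < (∑ e ∈ Astar, (g {e} - g ∅)) + g ∅ →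
      (1 - ε) * (1 - cf) * (1 - cg) * (f Astar / g Astar) ≤ f A / g A := by
  intro Astar hgAs hdenAs
  obtain ⟨hcf0, hcf1⟩ := hcf
  obtain ⟨hcg0, hcg1⟩ := hcg
  obtain ⟨hε0, hε1⟩ := hε
  set SfA := ∑ e ∈ A, (f {e} - f ∅) with hSfA
  set SgA := ∑ e ∈ A, (g {e} - g ∅) with hSgA
  set Sfs := ∑ e ∈ Astar, (f {e} - f ∅) with hSfs
  set Sgs := ∑ e ∈ Astar, (g {e} - g ∅) with hSgs
  have sum_nonneg_f : ∀ B : Finset E, 0 ≤ ∑ e ∈ B, (f {e} - f ∅) := by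
    intro B
    exact Finset.sum_nonneg fun e _ => by
      have := hfmono ∅ {e} (Finset.empty_subset _); linarith
  have sum_nonneg_g : ∀ B : Finset E, 0 ≤ ∑ e ∈ B, (g {e} - g ∅) := by
    intro B
    exact Finset.sum_nonneg fun e _ => by
      have := hgmono ∅ {e} (Finset.empty_subset _); linarith
  have hSfA0 : 0 ≤ SfA := sum_nonneg_f A
  have hSfs0 : 0 ≤ Sfs := sum_nonneg_f Astar
  have hSgs0 : 0 ≤ Sgs := sum_nonneg_g Astar
  -- squeeze bounds
  have hfA_low : (1 - cf) * SfA + f ∅ ≤ f A := aux_lower f cf hfcurv A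
  have hgA_up : g A ≤ SgA + g ∅ := aux_upper g hgsub A
  have hfs_up : f Astar ≤ Sfs + f ∅ := aux_upper f hfsub Astar
  have hgs_low : (1 - cg) * Sgs + g ∅ ≤ g Astar := aux_lower g cg hgcurv Astar
  have hf0e := hf0 ∅
  have hg0e := hg0 ∅
  -- step 1 : (1-cg) * (f*/g*) ≤ (Sfs + f∅)/(Sgs + g∅)
  have step1 : (1 - cg) * (f Astar / g Astar) ≤ (Sfs + f ∅) / (Sgs + g ∅) := by
    rw [← mul_div_assoc, div_le_div_iff₀ hgAs hdenAs]
    have h1 : (1 - cg) * (Sgs + g ∅) ≤ g Astar := by nlinarith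
    nlinarith [hf0 Astar, mul_le_mul_of_nonneg_left h1 (le_of_lt (lt_of_lt_of_le hgAs
      (le_of_eq rfl))), mul_le_mul hfs_up h1 (by nlinarith) (by linarith [hf0 Astar, hSfs0])]
  -- step 2 : happrox
  have step2 := happrox Astar
  -- step 3 : ((1-cf)*(SfA + f∅)) / (SgA + g∅) ≤ f A / g A
  have step3 : (1 - cf) * ((SfA + f ∅) / (SgA + g ∅)) ≤ f A / g A := by
    rw [← mul_div_assoc, div_le_div_iff₀ hdenA hgA]
    have h1 : (1 - cf) * (SfA + f ∅) ≤ f A := by nlinarith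
    exact mul_le_mul h1 hgA_up (le_of_lt hgA) (hf0 A)
  calc (1 - ε) * (1 - cf) * (1 - cg) * (f Astar / g Astar)
      = (1 - cf) * ((1 - ε) * ((1 - cg) * (f Astar / g Astar))) := by ring
    _ ≤ (1 - cf) * ((1 - ε) * ((Sfs + f ∅) / (Sgs + g ∅))) := by
        apply mul_le_mul_of_nonneg_left _ (by linarith)
        exact mul_le_mul_of_nonneg_left step1 (by linarith)
    _ ≤ (1 - cf) * ((SfA + f ∅) / (SgA + g ∅)) :=
        mul_le_mul_of_nonneg_left step2 (by linarith)
    _ ≤ f A / g A := step3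
end

section
/- Let f_1,...,f_N : 2^E → ℝ be normalised, monotone submodular functions, F = Σ_i f_i, p_i = max_{A ⊆ E, F(A)≠0} f_i(A)/F(A), and B = max_i |EX(B(f_i))|. Then Σ_{i=1}^N p_i ≤ B·n where n = |E|, provided F(A) > 0 for all nonempty A. -/
set_option linter.unusedSectionVars false

open Finset

section Greedy
variable {E : Type*} [Fintype E] [DecidableEq E]

noncomputable def ordE (E : Type*) [Fintype E] (e : E) : ℕ := (Fintype.equivFin E e : ℕ)

noncomputable def SkE (E : Type*) [Fintype E] (k : ℕ) : Finset E :=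
  Finset.univ.filter (fun e => ordE E e < k)

lemma mem_SkE {k : ℕ} {e : E} : e ∈ SkE E k ↔ ordE E e < k := by simp [SkE]

lemma ordE_lt (e : E) : ordE E e < Fintype.card E := (Fintype.equivFin E e).isLt

lemma SkE_zero : SkE E 0 = ∅ := by simp [SkE]

lemma SkE_card {k : ℕ} (hk : Fintype.card E ≤ k) : SkE E k = Finset.univ := by
  ext e; simp [mem_SkE, lt_of_lt_of_le (ordE_lt e) hk]

lemma ordE_symm (k : ℕ) (hk : k < Fintype.card E) :
    ordE E ((Fintype.equivFin E).symm ⟨k, hk⟩) = k := by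
  simp [ordE]

lemma symm_ordE (e : E) :
    (Fintype.equivFin E).symm ⟨ordE E e, ordE_lt e⟩ = e := by
  have : (⟨ordE E e, ordE_lt e⟩ : Fin (Fintype.card E)) = Fintype.equivFin E e := by
    ext; rfl
  rw [this, Equiv.symm_apply_apply]

lemma SkE_succ (k : ℕ) (hk : k < Fintype.card E) :
    SkE E (k + 1) = insert ((Fintype.equivFin E).symm ⟨k, hk⟩) (SkE E k) := by
  ext e
  simp only [mem_SkE, Finset.mem_insert, Nat.lt_succ_iff_lt_or_eq]
  constructor
  · rintro (h | h)
    · exact Or.inr h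
    · left
      have : (⟨k, hk⟩ : Fin (Fintype.card E)) = ⟨ordE E e, ordE_lt e⟩ := by
        exact Fin.ext h.symm
      rw [this, symm_ordE e]
  · rintro (h | h)
    · right
      rw [h, ordE_symm]
    · exact Or.inl h

lemma symm_not_mem_SkE (k : ℕ) (hk : k < Fintype.card E) :
    (Fintype.equivFin E).symm ⟨k, hk⟩ ∉ SkE E k := by
  simp [mem_SkE, ordE_symm]

variable (f : Finset E → ℝ)

/-- The greedy vector. -/
noncomputable def gvec (e : E) : ℝ := f (SkE E (ordE E e + 1)) - f (SkE E (ordE E e))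

lemma gvec_tele (h0 : f ∅ = 0) : ∀ k, ∑ e ∈ SkE E k, gvec f e = f (SkE E k) := by
  intro k
  induction k with
  | zero => simp [SkE_zero, h0]
  | succ k ih =>
    by_cases hk : k < Fintype.card E
    · rw [SkE_succ k hk, Finset.sum_insert (symm_not_mem_SkE k hk), ih]
      have : gvec f ((Fintype.equivFin E).symm ⟨k, hk⟩)
          = f (SkE E (k + 1)) - f (SkE E k) := by
        simp [gvec, ordE_symm]
      rw [this, SkE_succ k hk]
      ring
    · push_neg at hk
      have h1 : SkE E (k + 1) = SkE E k := by
        rw [SkE_card hk, SkE_card (le_trans hk (Nat.le_succ k))]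
      rw [h1, ih]

lemma gvec_feas (h0 : f ∅ = 0)
    (hsub : ∀ S T : Finset E, f (S ∩ T) + f (S ∪ T) ≤ f S + f T) :
    ∀ k, ∀ T : Finset E, T ⊆ SkE E k → ∑ e ∈ T, gvec f e ≤ f T := by
  intro k
  induction k with
  | zero =>
    intro T hT
    rw [SkE_zero, Finset.subset_empty] at hT
    simp [hT, h0]
  | succ k ih =>
    intro T hT
    by_cases hk : k < Fintype.card E
    · set a := (Fintype.equivFin E).symm ⟨k, hk⟩ with ha_def
      rw [SkE_succ k hk] at hT
      by_cases ha : a ∈ T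
      · have hT' : T.erase a ⊆ SkE E k := by
          intro e he
          rcases Finset.mem_erase.mp he with ⟨hne, heT⟩
          rcases Finset.mem_insert.mp (hT heT) with h | h
          · exact absurd h hne
          · exact h
        have hsum : ∑ e ∈ T.erase a, gvec f e + gvec f a = ∑ e ∈ T, gvec f e :=
          Finset.sum_erase_add T _ ha
        have h1 : ∑ e ∈ T.erase a, gvec f e ≤ f (T.erase a) := ih _ hT'
        have hga : gvec f a = f (SkE E (k + 1)) - f (SkE E k) := by
          simp [gvec, ha_def, ordE_symm]
        have hcap : T ∩ SkE E k = T.erase a := by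
          ext e
          simp only [Finset.mem_inter, Finset.mem_erase]
          constructor
          · rintro ⟨heT, heS⟩
            refine ⟨?_, heT⟩
            rintro rfl
            exact symm_not_mem_SkE k hk heS
          · rintro ⟨hne, heT⟩
            refine ⟨heT, ?_⟩
            rcases Finset.mem_insert.mp (hT heT) with h | h
            · exact absurd h hne
            · exact h
        have hcup : T ∪ SkE E k = SkE E (k + 1) := by
          apply Finset.Subset.antisymm
          · intro e he
            rw [SkE_succ k hk]
            rcases Finset.mem_union.mp he with h | h
            · exact hT h
            · exact Finset.mem_insert_of_mem h
          · rw [SkE_succ k hk]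
            intro e he
            rcases Finset.mem_insert.mp he with h | h
            · exact Finset.mem_union_left _ (h ▸ ha)
            · exact Finset.mem_union_right _ h
        have hsm := hsub T (SkE E k)
        rw [hcap, hcup] at hsm
        linarith
      · have hTk : T ⊆ SkE E k := by
          intro e he
          rcases Finset.mem_insert.mp (hT he) with h | h
          · subst h; exact absurd he ha
          · exact h
        exact ih T hTk
    · push_neg at hk
      have h1 : SkE E (k + 1) = SkE E k := by
        rw [SkE_card hk, SkE_card (le_trans hk (Nat.le_succ k))]
      exact ih T (h1 ▸ hT)

end Greedy

section Extreme
variable {E : Type*} [Fintype E] [DecidableEq E] (f : Finset E → ℝ)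

/-- The base polyhedron as a set. -/
def basePoly : Set (E → ℝ) :=
  {x : E → ℝ | (∀ S : Finset E, ∑ e ∈ S, x e ≤ f S) ∧ ∑ e, x e = f Finset.univ}

lemma gvec_mem (h0 : f ∅ = 0)
    (hsub : ∀ S T : Finset E, f (S ∩ T) + f (S ∪ T) ≤ f S + f T) :
    gvec f ∈ basePoly f := by
  constructor
  · intro S
    exact gvec_feas f h0 hsub (Fintype.card E) S
      (by rw [SkE_card (le_refl _)]; exact Finset.subset_univ S)
  · have := gvec_tele f h0 (Fintype.card E)
    rwa [SkE_card (le_refl _)] at this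

lemma gvec_extreme (h0 : f ∅ = 0)
    (hsub : ∀ S T : Finset E, f (S ∩ T) + f (S ∪ T) ≤ f S + f T) :
    gvec f ∈ Set.extremePoints ℝ (basePoly f) := by
  refine ⟨gvec_mem f h0 hsub, ?_⟩
  rintro y hy z hz ⟨a, b, ha, hb, hab, hsum⟩
  -- tightness of prefixes for y and z
  have key : ∀ k, ∑ e ∈ SkE E k, y e = f (SkE E k) ∧ ∑ e ∈ SkE E k, z e = f (SkE E k) := by
    intro k
    have hyk := hy.1 (SkE E k)
    have hzk := hz.1 (SkE E k)
    have hxk : a * (∑ e ∈ SkE E k, y e) + b * (∑ e ∈ SkE E k, z e) = f (SkE E k) := by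
      have := gvec_tele f h0 k
      rw [← this]
      rw [Finset.mul_sum, Finset.mul_sum, ← Finset.sum_add_distrib]
      apply Finset.sum_congr rfl
      intro e _
      have := congrFun hsum e
      simpa using this
    have hf : a * f (SkE E k) + b * f (SkE E k) = f (SkE E k) := by
      rw [← add_mul, hab, one_mul]
    have hbz : b * ∑ e ∈ SkE E k, z e ≤ b * f (SkE E k) :=
      mul_le_mul_of_nonneg_left hzk hb.le
    have hay : a * ∑ e ∈ SkE E k, y e ≤ a * f (SkE E k) :=
      mul_le_mul_of_nonneg_left hyk ha.le
    constructor
    · exact le_antisymm hyk ((mul_le_mul_iff_right₀ ha).mp (by linarith))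
    · exact le_antisymm hzk ((mul_le_mul_iff_right₀ hb).mp (by linarith))
  have hy_eq : y = gvec f := by
    funext e
    have h1 := (key (ordE E e + 1)).1
    have h2 := (key (ordE E e)).1
    rw [SkE_succ (ordE E e) (ordE_lt e), symm_ordE e] at h1
    rw [Finset.sum_insert (show e ∉ SkE E (ordE E e) by simp [mem_SkE])] at h1
    have : y e = f (SkE E (ordE E e + 1)) - f (SkE E (ordE E e)) := by
      rw [SkE_succ (ordE E e) (ordE_lt e), symm_ordE e]
      linarith
    rw [this]; rfl
  have hz_eq : z = gvec f := by
    funext e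
    have h1 := (key (ordE E e + 1)).2
    have h2 := (key (ordE E e)).2
    rw [SkE_succ (ordE E e) (ordE_lt e), symm_ordE e] at h1
    rw [Finset.sum_insert (show e ∉ SkE E (ordE E e) by simp [mem_SkE])] at h1
    have : z e = f (SkE E (ordE E e + 1)) - f (SkE E (ordE E e)) := by
      rw [SkE_succ (ordE E e) (ordE_lt e), symm_ordE e]
      linarith
    rw [this]; rfl
  exact hy_eq

end Extreme

section Finite
variable {E : Type*} [Fintype E] [DecidableEq E] (f : Finset E → ℝ)

lemma span_lemma (x : E → ℝ) (hx : x ∈ Set.extremePoints ℝ (basePoly f))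
    (v : E → ℝ) (hv : ∀ T : Finset E, ∑ e ∈ T, x e = f T → ∑ e ∈ T, v e = 0) :
    v = 0 := by
  classical
  by_cases hall : ∀ T : Finset E, ∑ e ∈ T, x e = f T
  · funext e
    have := hv {e} (hall {e})
    simpa using this
  · push_neg at hall
    obtain ⟨T₀, hT₀⟩ := hall
    set D : Finset (Finset E) := Finset.univ.filter (fun T => ∑ e ∈ T, x e ≠ f T) with hD_def
    have hD : D.Nonempty := ⟨T₀, by simp [hD_def, hT₀]⟩
    set ε : ℝ := D.inf' hD (fun T => (f T - ∑ e ∈ T, x e) / (|∑ e ∈ T, v e| + 1)) with hε_def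
    have hεpos : 0 < ε := by
      rw [hε_def, Finset.lt_inf'_iff]
      intro T hT
      have hne : ∑ e ∈ T, x e ≠ f T := by simpa [hD_def] using hT
      have hle : ∑ e ∈ T, x e ≤ f T := hx.1.1 T
      exact div_pos (by cases lt_or_eq_of_le hle with
        | inl h => linarith
        | inr h => exact absurd h hne) (by positivity)
    have hmem : ∀ s : ℝ, |s| ≤ 1 → x + (s * ε) • v ∈ basePoly f := by
      intro s hs
      constructor
      · intro T
        have hsum : ∑ e ∈ T, (x + (s * ε) • v) e
            = ∑ e ∈ T, x e + (s * ε) * ∑ e ∈ T, v e := by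
          rw [Finset.mul_sum, ← Finset.sum_add_distrib]
          apply Finset.sum_congr rfl
          intro e _
          simp [mul_comm]
        rw [hsum]
        by_cases ht : ∑ e ∈ T, x e = f T
        · rw [hv T ht, mul_zero, add_zero, ht]
        · have hTD : T ∈ D := by simp [hD_def, ht]
          have h1 : ε ≤ (f T - ∑ e ∈ T, x e) / (|∑ e ∈ T, v e| + 1) :=
            Finset.inf'_le _ hTD
          have h2 : ε * (|∑ e ∈ T, v e| + 1) ≤ f T - ∑ e ∈ T, x e := by
            rw [← le_div_iff₀ (by positivity)]
            exact h1
          have h3 : (s * ε) * ∑ e ∈ T, v e ≤ ε * |∑ e ∈ T, v e| := by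
            calc (s * ε) * ∑ e ∈ T, v e ≤ |(s * ε) * ∑ e ∈ T, v e| := le_abs_self _
            _ = |s| * ε * |∑ e ∈ T, v e| := by
                rw [abs_mul, abs_mul, abs_of_pos hεpos]
            _ ≤ 1 * ε * |∑ e ∈ T, v e| := by
                apply mul_le_mul_of_nonneg_right _ (abs_nonneg _)
                exact mul_le_mul_of_nonneg_right hs hεpos.le
            _ = ε * |∑ e ∈ T, v e| := by ring
          nlinarith [abs_nonneg (∑ e ∈ T, v e), hεpos]
        
      · have huniv : ∑ e, x e = f Finset.univ := hx.1.2
        have hvuniv : ∑ e, v e = 0 := hv Finset.univ huniv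
        have : ∑ e, (x + (s * ε) • v) e = ∑ e, x e + (s * ε) * ∑ e, v e := by
          rw [Finset.mul_sum, ← Finset.sum_add_distrib]
          apply Finset.sum_congr rfl
          intro e _
          simp [mul_comm]
        rw [this, hvuniv, mul_zero, add_zero, huniv]
    have hy1 : x + (1 * ε) • v ∈ basePoly f := hmem 1 (by norm_num)
    have hy2 : x + ((-1) * ε) • v ∈ basePoly f := hmem (-1) (by norm_num)
    have hseg : x ∈ openSegment ℝ (x + (1 * ε) • v) (x + ((-1) * ε) • v) := by
      refine ⟨1/2, 1/2, by norm_num, by norm_num, by norm_num, ?_⟩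
      funext e
      simp only [Pi.add_apply, Pi.smul_apply, smul_eq_mul]
      ring
    have := hx.2 hy1 hy2 hseg
    have hεv : (1 * ε) • v = 0 := by
      have h := congrArg (fun w => w - x) this
      simpa [add_sub_cancel_left] using h
    funext e
    have := congrFun hεv e
    simp only [Pi.smul_apply, smul_eq_mul, one_mul, Pi.zero_apply] at this ⊢
    rcases mul_eq_zero.mp this with h | h
    · exact absurd h hεpos.ne'
    · exact h

lemma ex_finite : (Set.extremePoints ℝ (basePoly f)).Finite := by
  classical
  set Φ : (E → ℝ) → Finset (Finset E) :=
    fun x => Finset.univ.filter (fun T => ∑ e ∈ T, x e = f T) with hΦ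
  apply Set.Finite.of_finite_image (f := Φ) (Set.toFinite _)
  intro x hx y hy hxy
  have hsub : x - y = 0 := by
    apply span_lemma f x hx
    intro T hT
    have hTx : T ∈ Φ x := by simp [hΦ, hT]
    have hTy : T ∈ Φ y := hxy ▸ hTx
    have hyT : ∑ e ∈ T, y e = f T := by simpa [hΦ] using hTy
    have : ∑ e ∈ T, (x - y) e = ∑ e ∈ T, x e - ∑ e ∈ T, y e := by
      rw [← Finset.sum_sub_distrib]; rfl
    rw [this, hT, hyT, sub_self]
  exact sub_eq_zero.mp hsub

lemma ex_ncard_pos (h0 : f ∅ = 0)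
    (hsub : ∀ S T : Finset E, f (S ∩ T) + f (S ∪ T) ≤ f S + f T) :
    0 < (Set.extremePoints ℝ (basePoly f)).ncard :=
  (Set.ncard_pos (ex_finite f)).mpr ⟨gvec f, gvec_extreme f h0 hsub⟩

end Finite

lemma subadd {E : Type*} [Fintype E] [DecidableEq E] (f : Finset E → ℝ) (h0 : f ∅ = 0)
    (hmono : ∀ S T : Finset E, S ⊆ T → f S ≤ f T)
    (hsub : ∀ S T : Finset E, f (S ∩ T) + f (S ∪ T) ≤ f S + f T) :
    ∀ A : Finset E, f A ≤ ∑ e ∈ A, f {e} := by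
  intro A
  induction A using Finset.induction_on with
  | empty => simp [h0]
  | @insert a s ha ih =>
    have h := hsub {a} s
    have h1 : {a} ∩ s = (∅ : Finset E) := Finset.singleton_inter_of_notMem ha
    have h2 : ({a} : Finset E) ∪ s = insert a s := (Finset.insert_eq a s).symm
    rw [h1, h2, h0] at h
    rw [Finset.sum_insert ha]
    linarith

theorem stmt_14 {E : Type*} [Fintype E] [DecidableEq E] (N : ℕ)
    (f : Fin N → Finset E → ℝ)
    (hnorm : ∀ i, f i ∅ = 0)
    (hmono : ∀ i, ∀ S T : Finset E, S ⊆ T → f i S ≤ f i T)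
    (hsub : ∀ i, ∀ S T : Finset E, f i (S ∩ T) + f i (S ∪ T) ≤ f i S + f i T)
    (F : Finset E → ℝ) (hF : ∀ A, F A = ∑ i, f i A)
    (hFpos : ∀ A : Finset E, A.Nonempty → 0 < F A)
    (p : Fin N → ℝ)
    (hp : ∀ i, IsGreatest
      {r : ℝ | ∃ A : Finset E, F A ≠ 0 ∧ r = f i A / F A} (p i))
    (B : ℕ)
    (hB : IsGreatest {b : ℕ | ∃ i : Fin N,
      b = (Set.extremePoints ℝ
        {x : E → ℝ | (∀ S : Finset E, ∑ e ∈ S, x e ≤ f i S) ∧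
          ∑ e, x e = f i Finset.univ}).ncard} B) :
    ∑ i, p i ≤ (B : ℝ) * (Fintype.card E) := by
  classical
  by_cases hN : N = 0
  · subst hN
    rw [Finset.univ_eq_empty, Finset.sum_empty]
    positivity
  · have hN0 : 0 < N := Nat.pos_of_ne_zero hN
    set i0 : Fin N := ⟨0, hN0⟩
    have hB1 : 1 ≤ B := by
      have h1 : (Set.extremePoints ℝ
          {x : E → ℝ | (∀ S : Finset E, ∑ e ∈ S, x e ≤ f i0 S) ∧
            ∑ e, x e = f i0 Finset.univ}).ncard ≤ B := hB.2 ⟨i0, rfl⟩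
      have h2 : 0 < (Set.extremePoints ℝ
          {x : E → ℝ | (∀ S : Finset E, ∑ e ∈ S, x e ≤ f i0 S) ∧
            ∑ e, x e = f i0 Finset.univ}).ncard :=
        ex_ncard_pos (f i0) (hnorm i0) (hsub i0)
      exact h2.trans_le h1
    have hf0 : ∀ i, ∀ e : E, 0 ≤ f i {e} := by
      intro i e
      have := hmono i ∅ {e} (Finset.empty_subset _)
      rwa [hnorm i] at this
    have hFe : ∀ e : E, 0 < F {e} := fun e => hFpos {e} (Finset.singleton_nonempty e)
    have key : ∀ i, p i ≤ ∑ e, f i {e} / F {e} := by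
      intro i
      obtain ⟨A, hFA, hpA⟩ := (hp i).1
      have hAne : A.Nonempty := by
        rcases Finset.eq_empty_or_nonempty A with rfl | h
        · exact absurd (by rw [hF]; simp [hnorm]) hFA
        · exact h
      have hFApos : 0 < F A := hFpos A hAne
      have hfA : f i A ≤ ∑ e ∈ A, f i {e} := subadd _ (hnorm i) (hmono i) (hsub i) A
      have hFeA : ∀ e ∈ A, F {e} ≤ F A := by
        intro e he
        rw [hF, hF]
        exact Finset.sum_le_sum
          (fun j _ => hmono j {e} A (Finset.singleton_subset_iff.mpr he))
      calc p i = f i A / F A := hpA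
        _ ≤ (∑ e ∈ A, f i {e}) / F A := by gcongr
        _ = ∑ e ∈ A, f i {e} / F A := by rw [Finset.sum_div]
        _ ≤ ∑ e ∈ A, f i {e} / F {e} := by
            apply Finset.sum_le_sum
            intro e he
            gcongr
            · exact hf0 i e
            · exact hFe e
            · exact hFeA e he
        _ ≤ ∑ e, f i {e} / F {e} :=
            Finset.sum_le_sum_of_subset_of_nonneg (Finset.subset_univ A)
              (fun e _ _ => div_nonneg (hf0 i e) (hFe e).le)
    have hsum2 : ∑ i, ∑ e, f i {e} / F {e} = (Fintype.card E : ℝ) := by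
      rw [Finset.sum_comm]
      have h1 : ∀ e : E, ∑ i, f i {e} / F {e} = 1 := by
        intro e
        rw [← Finset.sum_div, ← hF {e}]
        exact div_self (hFe e).ne'
      rw [Finset.sum_congr rfl (fun e _ => h1 e)]
      simp
    have hBcast : (1 : ℝ) ≤ (B : ℝ) := by exact_mod_cast hB1
    calc ∑ i, p i ≤ ∑ i, ∑ e, f i {e} / F {e} := Finset.sum_le_sum (fun i _ => key i)
      _ = (Fintype.card E : ℝ) := hsum2
      _ ≤ (B : ℝ) * (Fintype.card E) := by
          nlinarith [(Nat.cast_nonneg (Fintype.card E) : (0:ℝ) ≤ (Fintype.card E : ℝ))]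
end

section
/- Every monotone k-submodular function satisfies orthant diminishing returns: if A = (A_1,...,A_k) and B = (B_1,...,B_k) with A_j ⊆ B_j for all j, and e ∉ ∪_j B_j, then Δ_{e,i} f(B) ≤ Δ_{e,i} f(A) for every coordinate i. -/
/-- A `k`-tuple of pairwise disjoint subsets of `E`. -/
def PairwiseDisjointTuple {E : Type*} {k : ℕ} (A : Fin k → Finset E) : Prop :=
  ∀ i j, i ≠ j → Disjoint (A i) (A j)

/-- Insert `e` into the `i`-th component of the tuple `A`. -/
def insTuple {E : Type*} [DecidableEq E] {k : ℕ} (A : Fin k → Finset E)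
    (i : Fin k) (e : E) : Fin k → Finset E :=
  Function.update A i (insert e (A i))

/-- Componentwise meet of two tuples. -/
def meetTuple {E : Type*} [DecidableEq E] {k : ℕ}
    (A B : Fin k → Finset E) : Fin k → Finset E :=
  fun i => A i ∩ B i

/-- The `k`-submodular join of two tuples. -/
def joinTuple {E : Type*} [Fintype E] [DecidableEq E] {k : ℕ}
    (A B : Fin k → Finset E) : Fin k → Finset E :=
  fun i => (A i ∪ B i) \ (Finset.univ.filter (fun j => j ≠ i)).biUnion
    (fun j => A j ∪ B j)

lemma insTuple_apply {E : Type*} [DecidableEq E] {k : ℕ} (A : Fin k → Finset E)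
    (i j : Fin k) (e : E) :
    insTuple A i e j = if j = i then insert e (A i) else A j := by
  simp [insTuple, Function.update_apply]

theorem stmt_17 {E : Type*} [Fintype E] [DecidableEq E] (k : ℕ)
    (f : (Fin k → Finset E) → ℝ)
    (hsub : ∀ A B : Fin k → Finset E, PairwiseDisjointTuple A →
      PairwiseDisjointTuple B →
      f (meetTuple A B) + f (joinTuple A B) ≤ f A + f B)
    (hmono : ∀ A B : Fin k → Finset E, PairwiseDisjointTuple A →
      PairwiseDisjointTuple B → (∀ i, A i ⊆ B i) → f A ≤ f B)
    (A B : Fin k → Finset E) (hA : PairwiseDisjointTuple A)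
    (hB : PairwiseDisjointTuple B) (hAB : ∀ j, A j ⊆ B j)
    (e : E) (he : ∀ j, e ∉ B j) (i : Fin k) :
    f (insTuple B i e) - f B ≤ f (insTuple A i e) - f A := by
  have heA : ∀ j, e ∉ A j := fun j h => he j (hAB j h)
  have hA' : PairwiseDisjointTuple (insTuple A i e) := by
    intro a b hab
    rcases eq_or_ne a i with rfl | ha
    · have hb : b ≠ a := hab.symm
      simp only [insTuple, Function.update_self, Function.update_of_ne hb]
      rw [Finset.disjoint_insert_left]
      exact ⟨heA b, hA a b hab⟩
    · rcases eq_or_ne b i with rfl | hb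
      · simp only [insTuple, Function.update_self, Function.update_of_ne ha]
        rw [Finset.disjoint_insert_right]
        exact ⟨heA a, hA a b hab⟩
      · simp only [insTuple, Function.update_of_ne ha, Function.update_of_ne hb]
        exact hA a b hab
  have hmeet : meetTuple (insTuple A i e) B = A := by
    funext j
    rcases eq_or_ne j i with rfl | hj
    · show insTuple A j e j ∩ B j = A j
      simp only [insTuple, Function.update_self]
      rw [Finset.insert_inter_of_notMem (he j)]
      exact Finset.inter_eq_left.mpr (hAB j)
    · show insTuple A i e j ∩ B j = A j
      simp only [insTuple, Function.update_of_ne hj]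
      exact Finset.inter_eq_left.mpr (hAB j)
  have hXsub : ∀ l, insTuple A i e l ∪ B l ⊆ insert e (B l) := by
    intro l
    rcases eq_or_ne l i with rfl | hl
    · simp only [insTuple, Function.update_self]
      exact Finset.union_subset (Finset.insert_subset_insert _ (hAB l))
        (Finset.subset_insert _ _)
    · simp only [insTuple, Function.update_of_ne hl]
      exact Finset.union_subset ((hAB l).trans (Finset.subset_insert _ _))
        (Finset.subset_insert _ _)
  have hXsub' : ∀ l, l ≠ i → insTuple A i e l ∪ B l ⊆ B l := by
    intro l hl
    simp only [insTuple, Function.update_of_ne hl]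
    exact Finset.union_subset (hAB l) subset_rfl
  have hjoin : joinTuple (insTuple A i e) B = insTuple B i e := by
    funext j
    rcases eq_or_ne j i with rfl | hj
    · show _ = insTuple B j e j
      simp only [insTuple, Function.update_self, joinTuple]
      have h1 : insert e (A j) ∪ B j = insert e (B j) := by
        rw [Finset.insert_union, Finset.union_eq_right.mpr (hAB j)]
      rw [h1]
      apply Finset.sdiff_eq_self_iff_disjoint.mpr
      rw [Finset.disjoint_biUnion_right]
      intro l hl
      have hl' : l ≠ j := (Finset.mem_filter.mp hl).2
      refine Finset.disjoint_of_subset_right (hXsub' l hl') ?_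
      rw [Finset.disjoint_insert_left]
      exact ⟨he l, hB j l hl'.symm⟩
    · show _ = insTuple B i e j
      simp only [insTuple, Function.update_of_ne hj, joinTuple]
      rw [Finset.union_eq_right.mpr (hAB j)]
      apply Finset.sdiff_eq_self_iff_disjoint.mpr
      rw [Finset.disjoint_biUnion_right]
      intro l hl
      have hl' : l ≠ j := (Finset.mem_filter.mp hl).2
      refine Finset.disjoint_of_subset_right (hXsub l) ?_
      rw [Finset.disjoint_insert_right]
      exact ⟨he j, hB j l hl'.symm⟩
  have key := hsub (insTuple A i e) B hA' hB
  rw [hmeet, hjoin] at key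
  linarith
end
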